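/- Let m ≥ 2 be an even integer and define Q_m(y) = ∑_{j=0}^{m} C(m,j)·(j+1)!·y^j. Then there exists d_m > 0 such that Q_m(y) ≥ d_m · max{1, y^m} for all real y. -/

import Mathlib

open Finset

noncomputable def qc (m j : ℕ) : ℝ := (m.choose j : ℝ) * (j + 1).factorial
noncomputable def qb (m j : ℕ) : ℝ := (m.choose j : ℝ) * j.factorial

private lemma alt_sum_ge (n : ℕ) (c : ℕ → ℝ) (x : ℝ) (hx : 1 ≤ x)
    (hc : ∀ j, 0 ≤ c j) (hmono : ∀ j, j + 1 ≤ 2 * n → c j ≤ c (j + 1)) :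
    c 0 ≤ ∑ j ∈ range (2 * n + 1), c j * (-x) ^ j := by
  induction n with
  | zero => simp
  | succ n ih =>
    have hkey : 2 * (n + 1) + 1 = (2 * n + 1) + 1 + 1 := by ring
    rw [hkey, sum_range_succ, sum_range_succ]
    have h1 := ih (fun j hj => hmono j (by omega))
    have hxp : (0:ℝ) ≤ x ^ (2 * n + 1) := by positivity
    have he : (-x) ^ (2 * n + 1 + 1) = x ^ (2 * n + 1 + 1) := Even.neg_pow ⟨n + 1, by ring⟩ x
    have ho : (-x) ^ (2 * n + 1) = -x ^ (2 * n + 1) := Odd.neg_pow ⟨n, by ring⟩ x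
    have hm1 : c (2 * n + 1) ≤ c (2 * n + 1 + 1) := hmono _ (by omega)
    have hpow : x ^ (2 * n + 1 + 1) = x ^ (2 * n + 1) * x := pow_succ x _
    have key2 : c (2 * n + 1) * x ^ (2 * n + 1) ≤ c (2 * n + 1 + 1) * x ^ (2 * n + 1 + 1) := by
      rw [hpow]
      have hA : c (2 * n + 1) * x ^ (2 * n + 1) ≤ c (2 * n + 1 + 1) * x ^ (2 * n + 1) :=
        mul_le_mul_of_nonneg_right hm1 hxp
      nlinarith [mul_nonneg (hc (2 * n + 1 + 1)) hxp, hx]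
    rw [he, ho]
    nlinarith [key2, h1]

private lemma alt_sum_ge' (n : ℕ) (c : ℕ → ℝ) (x : ℝ) (hx : 1 ≤ x)
    (hc : ∀ j, 0 ≤ c j) (hmono : ∀ j, j + 1 ≤ 2 * n + 2 → c j ≤ c (j + 1)) :
    c 0 + (c (2 * n + 2) * x ^ (2 * n + 2) - c (2 * n + 1) * x ^ (2 * n + 1))
      ≤ ∑ j ∈ range (2 * (n + 1) + 1), c j * (-x) ^ j := by
  have hkey : 2 * (n + 1) + 1 = (2 * n + 1) + 1 + 1 := by ring
  rw [hkey, sum_range_succ, sum_range_succ]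
  have h1 := alt_sum_ge n c x hx hc (fun j hj => hmono j (by omega))
  have he : (-x) ^ (2 * n + 1 + 1) = x ^ (2 * n + 1 + 1) := Even.neg_pow ⟨n + 1, by ring⟩ x
  have ho : (-x) ^ (2 * n + 1) = -x ^ (2 * n + 1) := Odd.neg_pow ⟨n, by ring⟩ x
  rw [he, ho]
  have : (2 : ℕ) * n + 2 = 2 * n + 1 + 1 := by ring
  rw [this]
  linarith

private lemma sum_identity (n : ℕ) (c e : ℕ → ℝ) (y : ℝ)
    (h0 : e 0 = c 0)
    (hrel : ∀ j, j < n → e (j + 1) = c (j + 1) + ((j : ℝ) - n) * c j) :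
    (1 - (n : ℝ) * y) * (∑ j ∈ range (n + 1), c j * y ^ j)
      + y ^ 2 * (∑ j ∈ range (n + 1), (j : ℝ) * c j * y ^ (j - 1))
      = ∑ j ∈ range (n + 1), e j * y ^ j := by
  have hstep : ∀ j : ℕ, y ^ 2 * ((j : ℝ) * c j * y ^ (j - 1)) = (j : ℝ) * c j * y ^ (j + 1) := by
    intro j
    cases j with
    | zero => simp
    | succ k =>
      simp only [Nat.add_sub_cancel]
      push_cast
      ring
  calc (1 - (n : ℝ) * y) * (∑ j ∈ range (n + 1), c j * y ^ j)
      + y ^ 2 * (∑ j ∈ range (n + 1), (j : ℝ) * c j * y ^ (j - 1))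
      = ∑ j ∈ range (n + 1), (c j * y ^ j + ((j : ℝ) - n) * c j * y ^ (j + 1)) := by
        rw [Finset.mul_sum, Finset.mul_sum, ← Finset.sum_add_distrib]
        refine Finset.sum_congr rfl fun j hj => ?_
        rw [hstep j]
        ring
    _ = (∑ j ∈ range (n + 1), c j * y ^ j)
        + ∑ j ∈ range (n + 1), ((j : ℝ) - n) * c j * y ^ (j + 1) := Finset.sum_add_distrib
    _ = (c 0 + ∑ j ∈ range n, c (j + 1) * y ^ (j + 1))
        + ∑ j ∈ range n, ((j : ℝ) - n) * c j * y ^ (j + 1) := by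
        rw [Finset.sum_range_succ' (fun j => c j * y ^ j) n, Finset.sum_range_succ]
        simp [add_comm]
    _ = e 0 + ∑ j ∈ range n, e (j + 1) * y ^ (j + 1) := by
        rw [h0, add_assoc, ← Finset.sum_add_distrib]
        congr 1
        refine Finset.sum_congr rfl fun j hj => ?_
        rw [hrel j (Finset.mem_range.mp hj)]
        ring
    _ = ∑ j ∈ range (n + 1), e j * y ^ j := by
        rw [Finset.sum_range_succ' (fun j => e j * y ^ j) n]
        simp [add_comm]

private lemma hasDerivAt_psum (n : ℕ) (c : ℕ → ℝ) (y : ℝ) :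
    HasDerivAt (fun y : ℝ => ∑ j ∈ range (n + 1), c j * y ^ j)
      (∑ j ∈ range (n + 1), (j : ℝ) * c j * y ^ (j - 1)) y := by
  refine HasDerivAt.fun_sum fun j _ => ?_
  have := (hasDerivAt_pow j y).const_mul (c j)
  convert this using 1
  · rfl
  ring

private lemma main_aux (m : ℕ) (hm : 2 ≤ m) (hme : Even m) :
    ∃ d : ℝ, 0 < d ∧ ∀ y : ℝ,
      d * max 1 (y ^ m) ≤ ∑ j ∈ Finset.range (m + 1), qc m j * y ^ j := by
  obtain ⟨k, hk⟩ := hme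
  obtain ⟨n, hn⟩ : ∃ n, m = 2 * (n + 1) := ⟨k - 1, by omega⟩
  -- basic coefficient facts
  have key : ∀ j, j < m → (m.choose (j + 1) : ℝ) * (j + 1) = (m.choose j : ℝ) * ((m : ℝ) - j) := by
    intro j hj
    have h : ((m.choose (j + 1) * (j + 1) : ℕ) : ℝ) = ((m.choose j * (m - j) : ℕ) : ℝ) := by
      exact_mod_cast congrArg (Nat.cast (R := ℝ)) (Nat.choose_succ_right_eq m j)
    push_cast [Nat.cast_sub hj.le] at h
    exact h
  have hc0 : qc m 0 = 1 := by simp [qc, Nat.factorial]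
  have hb0 : qb m 0 = 1 := by simp [qb, Nat.factorial]
  have hc_nonneg : ∀ j, 0 ≤ qc m j := by intro j; unfold qc; positivity
  have hb_nonneg : ∀ j, 0 ≤ qb m j := by intro j; unfold qb; positivity
  have hfs : ∀ j : ℕ, ((j + 1).factorial : ℝ) = (j + 1) * j.factorial := by
    intro j; push_cast [Nat.factorial_succ]; ring
  have hmono_c : ∀ j, j + 1 ≤ m → qc m j ≤ qc m (j + 1) := by
    intro j hj
    have hkey := key j (by omega)
    have hj1 : (1 : ℝ) ≤ (m : ℝ) - j := by
      have : (j : ℝ) + 1 ≤ m := by exact_mod_cast hj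
      linarith
    unfold qc
    rw [hfs (j + 1)]
    have hC0 : (0:ℝ) ≤ (m.choose j : ℝ) := by positivity
    have hC1 : (0:ℝ) ≤ (m.choose (j+1) : ℝ) := by positivity
    have hF : (0:ℝ) ≤ ((j + 1).factorial : ℝ) := by positivity
    have hkeyF : (m.choose (j + 1) : ℝ) * ((j:ℝ) + 1) * ((j + 1).factorial : ℝ)
        = (m.choose j : ℝ) * ((m : ℝ) - j) * ((j + 1).factorial : ℝ) := by rw [hkey]
    push_cast at hkeyF ⊢
    nlinarith [hkeyF, mul_nonneg hC1 hF, mul_nonneg hC0 hF,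
      mul_le_mul_of_nonneg_right hj1 (mul_nonneg hC0 hF)]
  have hmono_b : ∀ j, j + 1 ≤ m → qb m j ≤ qb m (j + 1) := by
    intro j hj
    have hkey := key j (by omega)
    have hj1 : (1 : ℝ) ≤ (m : ℝ) - j := by
      have : (j : ℝ) + 1 ≤ m := by exact_mod_cast hj
      linarith
    unfold qb
    rw [hfs j]
    have hC0 : (0:ℝ) ≤ (m.choose j : ℝ) := by positivity
    have hF : (0:ℝ) ≤ (j.factorial : ℝ) := by positivity
    have hkeyF : (m.choose (j + 1) : ℝ) * ((j:ℝ) + 1) * (j.factorial : ℝ)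
        = (m.choose j : ℝ) * ((m : ℝ) - j) * (j.factorial : ℝ) := by rw [hkey]
    push_cast at hkeyF ⊢
    nlinarith [hkeyF, mul_nonneg hC0 hF, mul_le_mul_of_nonneg_right hj1 (mul_nonneg hC0 hF)]
  -- the coefficient relations for the two differential identities
  have hrelq : ∀ j, j < m → qb m (j + 1) = qc m (j + 1) + ((j : ℝ) - m) * qc m j := by
    intro j hj
    have hkey := key j hj
    unfold qb qc
    push_cast [Nat.factorial_succ]
    linear_combination (-((j:ℝ) + 1) * (j.factorial : ℝ)) * hkey
  set e : ℕ → ℝ := fun j => if j = 0 then 1 else 0 with he_def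
  have hrelr : ∀ j, j < m → e (j + 1) = qb m (j + 1) + ((j : ℝ) - m) * qb m j := by
    intro j hj
    have hkey := key j hj
    simp only [he_def, if_neg (Nat.succ_ne_zero j)]
    unfold qb
    push_cast [Nat.factorial_succ]
    linear_combination (-(j.factorial : ℝ)) * hkey
  have hesum : ∀ y : ℝ, ∑ j ∈ range (m + 1), e j * y ^ j = 1 := by
    intro y
    rw [Finset.sum_eq_single 0]
    · simp [he_def]
    · intro j _ hj; simp [he_def, hj]
    · intro h; exact absurd (Finset.mem_range.mpr (by omega)) h
  -- values at 0
  have hval0 : ∀ f : ℕ → ℝ, ∑ j ∈ range (m + 1), f j * (0:ℝ) ^ j = f 0 := by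
    intro f
    rw [Finset.sum_eq_single 0]
    · simp
    · intro j _ hj; simp [zero_pow hj]
    · intro h; exact absurd (Finset.mem_range.mpr (by omega)) h
  -- continuity
  have hq_cont : Continuous fun y : ℝ => ∑ j ∈ range (m + 1), qc m j * y ^ j :=
    continuous_finset_sum _ fun j _ => continuous_const.mul (continuous_pow j)
  have hr_cont : Continuous fun y : ℝ => ∑ j ∈ range (m + 1), qb m j * y ^ j :=
    continuous_finset_sum _ fun j _ => continuous_const.mul (continuous_pow j)
  -- bounds for nonnegative y
  have hq_ge_one : ∀ y : ℝ, 0 ≤ y → 1 ≤ ∑ j ∈ range (m + 1), qc m j * y ^ j := by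
    intro y hy
    have h := Finset.single_le_sum (f := fun j => qc m j * y ^ j)
      (fun j _ => mul_nonneg (hc_nonneg j) (pow_nonneg hy j)) (Finset.mem_range.mpr (by omega : 0 < m + 1))
    simpa [hc0] using h
  have hcm : (1 : ℝ) ≤ qc m m := by
    unfold qc
    rw [Nat.choose_self]
    simpa using (by exact_mod_cast Nat.one_le_iff_ne_zero.mpr (Nat.factorial_ne_zero (m+1)) : (1:ℝ) ≤ ((m+1).factorial : ℝ))
  have hq_ge_pow : ∀ y : ℝ, 0 ≤ y → y ^ m ≤ ∑ j ∈ range (m + 1), qc m j * y ^ j := by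
    intro y hy
    have h := Finset.single_le_sum (f := fun j => qc m j * y ^ j)
      (fun j _ => mul_nonneg (hc_nonneg j) (pow_nonneg hy j)) (Finset.mem_range.mpr (by omega : m < m + 1))
    have h2 : y ^ m ≤ qc m m * y ^ m := le_mul_of_one_le_left (pow_nonneg hy m) hcm
    exact h2.trans h
  -- bound for y ≤ -2
  have hq_neg_big : ∀ y : ℝ, y ≤ -2 → max 1 (y ^ m) ≤ ∑ j ∈ range (m + 1), qc m j * y ^ j := by
    intro y hy
    set x : ℝ := -y with hx_def
    have hx2 : 2 ≤ x := by simp [hx_def]; linarith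
    have hx1 : (1:ℝ) ≤ x := by linarith
    have hyx : y = -x := by simp [hx_def]
    have h := alt_sum_ge' n (qc m) x hx1 hc_nonneg (fun j hj => hmono_c j (by omega))
    have e1 : 2 * n + 2 = m := by omega
    have e2 : 2 * (n + 1) + 1 = m + 1 := by omega
    rw [e2] at h
    rw [e1] at h
    have e3 : 2 * n + 1 = m - 1 := by omega
    rw [e3] at h
    rw [hyx]
    have hsum : ∑ j ∈ range (m + 1), qc m j * (-x) ^ j
        = ∑ j ∈ range (m + 1), qc m j * (-x) ^ j := rfl
    -- show max 1 ((-x)^m) ≤ sum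
    have hxm : (-x) ^ m = x ^ m := Even.neg_pow ⟨k, hk⟩ x
    rw [hxm]
    have hmm : qc m (m - 1) ≤ qc m m := by
      have := hmono_c (m - 1) (by omega)
      have e4 : m - 1 + 1 = m := by omega
      rwa [e4] at this
    have hcm2 : (2 : ℝ) ≤ qc m m := by
      unfold qc
      rw [Nat.choose_self]
      have h2 : (2 : ℕ) ≤ (m + 1).factorial := le_trans (by norm_num) (Nat.factorial_le (by omega : 2 ≤ m + 1))
      have h2' : (2:ℝ) ≤ ((m+1).factorial : ℝ) := by exact_mod_cast h2
      push_cast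
      linarith
    have hps : x ^ m = x ^ (m - 1) * x := by
      rw [← pow_succ]
      congr 1
      omega
    have hxp : (0:ℝ) ≤ x ^ (m - 1) := by positivity
    have hgap : x ^ m ≤ qc m m * x ^ m - qc m (m - 1) * x ^ (m - 1) := by
      rw [hps]
      nlinarith [mul_le_mul_of_nonneg_right hmm hxp, mul_nonneg hxp (by linarith : (0:ℝ) ≤ x - 2),
        mul_nonneg (mul_nonneg hxp (by linarith : (0:ℝ) ≤ x - 2)) (by linarith : (0:ℝ) ≤ qc m m - 2)]
    have hxm1 : (1:ℝ) ≤ x ^ m := one_le_pow₀ hx1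
    rw [hc0] at h
    apply max_le
    · linarith
    · linarith
  -- positivity of r on [-2, 0]
  have hr_neg2 : (1:ℝ) ≤ ∑ j ∈ range (m + 1), qb m j * (-2:ℝ) ^ j := by
    have h := alt_sum_ge (n + 1) (qb m) 2 one_le_two hb_nonneg (fun j hj => hmono_b j (by omega))
    have e2 : 2 * (n + 1) + 1 = m + 1 := by omega
    rw [e2, hb0] at h
    exact h
  have hr_pos : ∀ y ∈ Set.Icc (-2:ℝ) 0, 0 < ∑ j ∈ range (m + 1), qb m j * y ^ j := by
    obtain ⟨z, hz, hmin⟩ := isCompact_Icc.exists_isMinOn (s := Set.Icc (-2:ℝ) 0)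
      (Set.nonempty_Icc.mpr (by norm_num)) hr_cont.continuousOn
    have hzpos : 0 < ∑ j ∈ range (m + 1), qb m j * z ^ j := by
      rcases eq_or_lt_of_le hz.1 with h | h
      · rw [← h]; linarith [hr_neg2]
      · rcases eq_or_lt_of_le hz.2 with h2 | h2
        · rw [h2, hval0 (qb m), hb0]; norm_num
        · have hloc : IsLocalMin (fun y : ℝ => ∑ j ∈ range (m + 1), qb m j * y ^ j) z :=
            hmin.isLocalMin (Icc_mem_nhds h h2)
          have hzero : (∑ j ∈ range (m + 1), (j : ℝ) * qb m j * z ^ (j - 1)) = 0 :=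
            hloc.hasDerivAt_eq_zero (hasDerivAt_psum m (qb m) z)
          have hid := sum_identity m (qb m) e z (by rw [hb0]; simp [he_def]) hrelr
          rw [hzero, hesum z] at hid
          have hpos : (0:ℝ) < 1 - (m : ℝ) * z := by
            have : (0:ℝ) ≤ (m : ℝ) := Nat.cast_nonneg m
            nlinarith
          nlinarith [hid]
    exact fun y hy => lt_of_lt_of_le hzpos (hmin hy)
  -- positivity of q on [-2, 0]
  obtain ⟨z, hz, hmin⟩ := isCompact_Icc.exists_isMinOn (s := Set.Icc (-2:ℝ) 0)
    (Set.nonempty_Icc.mpr (by norm_num)) hq_cont.continuousOn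
  have hzpos : 0 < ∑ j ∈ range (m + 1), qc m j * z ^ j := by
    rcases eq_or_lt_of_le hz.1 with h | h
    · rw [← h]
      have := hq_neg_big (-2) (by norm_num)
      calc (0:ℝ) < 1 := one_pos
        _ ≤ max 1 ((-2:ℝ) ^ m) := le_max_left _ _
        _ ≤ _ := this
    · rcases eq_or_lt_of_le hz.2 with h2 | h2
      · rw [h2, hval0 (qc m), hc0]; norm_num
      · have hloc : IsLocalMin (fun y : ℝ => ∑ j ∈ range (m + 1), qc m j * y ^ j) z :=
          hmin.isLocalMin (Icc_mem_nhds h h2)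
        have hzero : (∑ j ∈ range (m + 1), (j : ℝ) * qc m j * z ^ (j - 1)) = 0 :=
          hloc.hasDerivAt_eq_zero (hasDerivAt_psum m (qc m) z)
        have hid := sum_identity m (qc m) (qb m) z (by rw [hb0, hc0]) hrelq
        rw [hzero] at hid
        have hrz := hr_pos z ⟨le_of_lt h, le_of_lt h2⟩
        have hpos : (0:ℝ) < 1 - (m : ℝ) * z := by
          have : (0:ℝ) ≤ (m : ℝ) := Nat.cast_nonneg m
          nlinarith
        nlinarith [hid, hrz]
  -- assemble
  set C : ℝ := ∑ j ∈ range (m + 1), qc m j * z ^ j with hC_def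
  have h2m : (0:ℝ) < 2 ^ m := by positivity
  refine ⟨min 1 (C / 2 ^ m), lt_min one_pos (div_pos hzpos h2m), ?_⟩
  intro y
  have hdle1 : min 1 (C / 2 ^ m) ≤ 1 := min_le_left _ _
  have hd_nonneg : 0 ≤ min 1 (C / 2 ^ m) := le_min (by norm_num) (le_of_lt (div_pos hzpos h2m))
  have hmax_nonneg : (0:ℝ) ≤ max 1 (y ^ m) := le_trans zero_le_one (le_max_left _ _)
  rcases le_or_gt 0 y with hy | hy
  · have hmax : max 1 (y ^ m) ≤ ∑ j ∈ range (m + 1), qc m j * y ^ j :=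
      max_le (hq_ge_one y hy) (hq_ge_pow y hy)
    calc min 1 (C / 2 ^ m) * max 1 (y ^ m) ≤ 1 * max 1 (y ^ m) :=
          mul_le_mul_of_nonneg_right hdle1 hmax_nonneg
      _ = max 1 (y ^ m) := one_mul _
      _ ≤ _ := hmax
  · rcases le_or_gt (-2) y with hy2 | hy2
    · -- y ∈ [-2, 0)
      have hmem : y ∈ Set.Icc (-2:ℝ) 0 := ⟨hy2, le_of_lt hy⟩
      have hqy : C ≤ ∑ j ∈ range (m + 1), qc m j * y ^ j := hmin hmem
      have habs : |y| ≤ 2 := abs_le.mpr ⟨hy2, by linarith⟩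
      have hym : y ^ m ≤ 2 ^ m := by
        calc y ^ m = |y| ^ m := (Even.pow_abs ⟨k, hk⟩ y).symm
          _ ≤ 2 ^ m := pow_le_pow_left₀ (abs_nonneg y) habs m
      have hmax2 : max 1 (y ^ m) ≤ 2 ^ m := max_le (one_le_pow₀ one_le_two) hym
      calc min 1 (C / 2 ^ m) * max 1 (y ^ m) ≤ (C / 2 ^ m) * 2 ^ m :=
            mul_le_mul (min_le_right _ _) hmax2 hmax_nonneg (le_of_lt (div_pos hzpos h2m))
        _ = C := div_mul_cancel₀ C (ne_of_gt h2m)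
        _ ≤ _ := hqy
    · -- y < -2
      have hmax : max 1 (y ^ m) ≤ ∑ j ∈ range (m + 1), qc m j * y ^ j :=
        hq_neg_big y (le_of_lt hy2)
      calc min 1 (C / 2 ^ m) * max 1 (y ^ m) ≤ 1 * max 1 (y ^ m) :=
            mul_le_mul_of_nonneg_right hdle1 hmax_nonneg
        _ = max 1 (y ^ m) := one_mul _
        _ ≤ _ := hmax

theorem stmt_1 (m : ℕ) (hm : 2 ≤ m) (hme : Even m) :
    ∃ d : ℝ, 0 < d ∧ ∀ y : ℝ,
      d * max 1 (y ^ m) ≤ ∑ j ∈ Finset.range (m + 1), (m.choose j : ℝ) * (j + 1).factorial * y ^ j := by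
  have h := main_aux m hm hme
  simpa only [qc] using h
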